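/- Let F be a field and let E be an n×n matrix, A_xv an n×v matrix, A_zx a z×n matrix, A_zv a z×v matrix, C_x a p×n matrix, C_v a p×v matrix, and Φ̄ a v×z matrix over F, and assume the v×v matrix W = 1 − Φ̄*A_zv is invertible. Then the (n+p+v)×(n+v) matrix [E, 0; −C_x, −C_v; −Φ̄*A_zx, W] is of full column rank if and only if the (n+p)×n matrix [E; C_x + C_v*W⁻¹*Φ̄*A_zx] is of full column rank. -/

import Mathlib

open Matrix


/-- With `W = 1 − Φ̄*A_zv` invertible, the matrix
`[E, 0; −C_x, −C_v; −Φ̄*A_zx, W]` is of full column rank iff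
`[E; C_x + C_v*W⁻¹*Φ̄*A_zx]` is. -/
theorem stmt14 {F : Type*} [Field F] {n v z p : ℕ}
    (E : Matrix (Fin n) (Fin n) F) (Axv : Matrix (Fin n) (Fin v) F)
    (Azx : Matrix (Fin z) (Fin n) F) (Azv : Matrix (Fin z) (Fin v) F)
    (Cx : Matrix (Fin p) (Fin n) F) (Cv : Matrix (Fin p) (Fin v) F)
    (Φ : Matrix (Fin v) (Fin z) F)
    (hW : IsUnit (1 - Φ * Azv)) :
    Function.Injective (Matrix.fromRows (Matrix.fromRows
        (Matrix.fromCols E 0)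
        (Matrix.fromCols (-Cx) (-Cv)))
        (Matrix.fromCols (-(Φ * Azx)) (1 - Φ * Azv))).mulVecLin ↔
    Function.Injective (Matrix.fromRows
        E (Cx + Cv * (1 - Φ * Azv)⁻¹ * Φ * Azx)).mulVecLin := by
  set W := 1 - Φ * Azv with hWdef
  have hdet : IsUnit W.det := (Matrix.isUnit_iff_isUnit_det W).mp hW
  have hWinv' : W * W⁻¹ = 1 := Matrix.mul_nonsing_inv W hdet
  rw [← LinearMap.ker_eq_bot, ← LinearMap.ker_eq_bot,
    LinearMap.ker_eq_bot', LinearMap.ker_eq_bot']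
  have key : ∀ (x : Fin n → F) (y : Fin v → F), W *ᵥ y = (Φ * Azx) *ᵥ x →
      Cv *ᵥ y = (Cv * W⁻¹ * Φ * Azx) *ᵥ x := by
    intro x y hy
    have : y = (W⁻¹ * (Φ * Azx)) *ᵥ x := by
      rw [← Matrix.mulVec_mulVec, ← hy, Matrix.mulVec_mulVec,
        Matrix.nonsing_inv_mul W hdet, Matrix.one_mulVec]
    rw [this, Matrix.mulVec_mulVec, ← Matrix.mul_assoc, Matrix.mul_assoc (Cv * W⁻¹)]
  constructor
  · intro h x hx
    rw [mulVecLin_apply, fromRows_mulVec] at hx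
    have h1 : E *ᵥ x = 0 := funext fun i => congrFun hx (Sum.inl i)
    have h2 : (Cx + Cv * W⁻¹ * Φ * Azx) *ᵥ x = 0 :=
      funext fun i => congrFun hx (Sum.inr i)
    set y : Fin v → F := (W⁻¹ * (Φ * Azx)) *ᵥ x with hy
    have hWy : W *ᵥ y = (Φ * Azx) *ᵥ x := by
      rw [hy, Matrix.mulVec_mulVec, ← Matrix.mul_assoc, hWinv', Matrix.one_mul]
    have hCvy := key x y hWy
    have hu : Sum.elim x y = 0 := by
      apply h
      rw [mulVecLin_apply, fromRows_mulVec, fromRows_mulVec,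
        fromCols_mulVec_sumElim, fromCols_mulVec_sumElim,
        fromCols_mulVec_sumElim]
      have e1 : E *ᵥ x + (0 : Matrix (Fin n) (Fin v) F) *ᵥ y = 0 := by simp [h1]
      have e2 : (-Cx) *ᵥ x + (-Cv) *ᵥ y = 0 := by
        simp only [Matrix.neg_mulVec, ← neg_add]
        rw [hCvy, ← Matrix.add_mulVec, h2, neg_zero]
      have e3 : (-(Φ * Azx)) *ᵥ x + W *ᵥ y = 0 := by
        rw [hWy, Matrix.neg_mulVec, neg_add_cancel]
      rw [e1, e2, e3]
      ext (i|j|k) <;> simp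
    exact funext fun i => congrFun hu (Sum.inl i)
  · intro h u hu
    rw [mulVecLin_apply] at hu
    set x : Fin n → F := u ∘ Sum.inl with hxdef
    set y : Fin v → F := u ∘ Sum.inr with hydef
    have hux : u = Sum.elim x y := by ext (i|j) <;> rfl
    rw [hux, fromRows_mulVec, fromRows_mulVec, fromCols_mulVec_sumElim,
      fromCols_mulVec_sumElim, fromCols_mulVec_sumElim] at hu
    have h1 : E *ᵥ x + (0 : Matrix (Fin n) (Fin v) F) *ᵥ y = 0 :=
      funext fun i => congrFun hu (Sum.inl (Sum.inl i))
    have h2 : (-Cx) *ᵥ x + (-Cv) *ᵥ y = 0 :=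
      funext fun i => congrFun hu (Sum.inl (Sum.inr i))
    have h3 : (-(Φ * Azx)) *ᵥ x + W *ᵥ y = 0 :=
      funext fun i => congrFun hu (Sum.inr i)
    have hWy : W *ᵥ y = (Φ * Azx) *ᵥ x := by
      rwa [Matrix.neg_mulVec, neg_add_eq_zero, eq_comm] at h3
    have hCvy := key x y hWy
    have hx0 : x = 0 := by
      apply h
      rw [mulVecLin_apply, fromRows_mulVec]
      have e1 : E *ᵥ x = 0 := by
        have := h1; rwa [Matrix.zero_mulVec, add_zero] at this
      have e2 : (Cx + Cv * W⁻¹ * Φ * Azx) *ᵥ x = 0 := by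
        rw [Matrix.add_mulVec, ← hCvy]
        have := h2
        simp only [Matrix.neg_mulVec, ← neg_add, neg_eq_zero] at this
        exact this
      rw [e1, e2]
      ext (i|j) <;> simp
    rw [hux, hx0]
    have hy0 : y = 0 := by
      have : W *ᵥ y = 0 := by rw [hWy, hx0, Matrix.mulVec_zero]
      have := congrArg (W⁻¹ *ᵥ ·) this
      simpa [Matrix.mulVec_mulVec, Matrix.nonsing_inv_mul W hdet] using this
    rw [hy0]
    ext (i|j) <;> simp
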